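/- Let (X_1,Y_1),...,(X_n,Y_n) be i.i.d. copies of (X,Y) from the true model. Let Λ = ((λ_b),(f_b)) be a mixing measure with P(X ∈ D_b(Λ)) > 0 for every b, and define the majority-vote gap Δ = min_b [ P(Y=b | X ∈ D_b(Λ)) − max_{j≠b} P(Y=j | X ∈ D_b(Λ)) ]. Let m_b = #{i : X_i ∈ D_b(Λ)}. If Δ > 0, then conditionally on the region-membership indicators (1{X_i ∈ D_b(Λ)})_{1≤i≤n, 1≤b≤K}, on the event that m_b ≥ 1 for every b, the conditional probability that for every b the label b is the unique majority label among {Y_i : X_i ∈ D_b(Λ)} (that is, the majority-vote estimator π̂_MV equals the identity) is at least 1 − 2K² exp( −2Δ² (min_b m_b) / 9 ). -/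

import Mathlib

open MeasureTheory ProbabilityTheory


lemma exp_cubic_upper {t : ℝ} (h0 : 0 ≤ t) (h1 : t ≤ 1) :
    Real.exp t ≤ 1 + t + t ^ 2 / 2 + 2 / 9 * t ^ 3 := by
  have hb := Real.exp_bound (x := t) (by rw [abs_of_nonneg h0]; exact h1) (n := 3) (by norm_num)
  have hs : ∑ i ∈ Finset.range 3, t ^ i / (Nat.factorial i) = 1 + t + t ^ 2 / 2 := by
    simp [Finset.sum_range_succ, Nat.factorial]
  rw [hs, abs_of_nonneg h0] at hb
  norm_num [Nat.factorial] at hb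
  have := abs_le.mp hb
  nlinarith [this.1, this.2]

lemma exp_cubic_upper_neg {t : ℝ} (h0 : 0 ≤ t) (h1 : t ≤ 1) :
    Real.exp (-t) ≤ 1 - t + t ^ 2 / 2 + 2 / 9 * t ^ 3 := by
  have hb := Real.exp_bound (x := -t) (by rw [abs_neg, abs_of_nonneg h0]; exact h1) (n := 3) (by norm_num)
  have hs : ∑ i ∈ Finset.range 3, (-t) ^ i / (Nat.factorial i) = 1 - t + t ^ 2 / 2 := by
    simp [Finset.sum_range_succ, Nat.factorial]; ring
  rw [hs, abs_neg, abs_of_nonneg h0] at hb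
  norm_num [Nat.factorial] at hb
  have := abs_le.mp hb
  nlinarith [this.1, this.2]

lemma mgf_step {K : ℕ} (q : Fin K → ℝ) (hq0 : ∀ k, 0 ≤ q k) (hq1 : ∑ k, q k = 1)
    (b j : Fin K) (hjb : j ≠ b) (Δ : ℝ) (hΔpos : 0 < Δ) (hΔ1 : Δ ≤ 1) (hgap : Δ ≤ q b - q j) :
    ∑ k, q k * Real.exp ((4 * Δ / 5) * ((if k = j then (1:ℝ) else 0) - (if k = b then 1 else 0)))
      ≤ Real.exp (-2 * Δ ^ 2 / 9) := by
  set t : ℝ := 4 * Δ / 5 with ht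
  have ht0 : 0 ≤ t := by positivity
  have ht1 : t ≤ 1 := by rw [ht]; linarith
  have he1 := exp_cubic_upper ht0 ht1
  have he2 := exp_cubic_upper_neg ht0 ht1
  have hterm : ∀ k, q k * Real.exp (t * ((if k = j then (1:ℝ) else 0) - (if k = b then 1 else 0)))
      = q k + (if k = j then (Real.exp t - 1) * q k else 0)
            + (if k = b then (Real.exp (-t) - 1) * q k else 0) := by
    intro k
    rcases eq_or_ne k j with rfl | hkj
    · rw [if_pos rfl, if_pos rfl, if_neg hjb, if_neg hjb, sub_zero, mul_one]
      ring
    · rcases eq_or_ne k b with rfl | hkb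
      · rw [if_neg hkj, if_neg hkj, if_pos rfl, if_pos rfl, zero_sub, mul_neg, mul_one]
        ring
      · rw [if_neg hkj, if_neg hkj, if_neg hkb, if_neg hkb]
        simp
  rw [Finset.sum_congr rfl (fun k _ => hterm k)]
  rw [Finset.sum_add_distrib, Finset.sum_add_distrib, hq1,
    Finset.sum_ite_eq' Finset.univ j (fun k => (Real.exp t - 1) * q k),
    Finset.sum_ite_eq' Finset.univ b (fun k => (Real.exp (-t) - 1) * q k)]
  simp only [Finset.mem_univ, if_pos]
  -- sum of two q-values is at most 1
  have hqjb : q j + q b ≤ 1 := by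
    have hsub : ({j, b} : Finset (Fin K)) ⊆ Finset.univ := Finset.subset_univ _
    have := Finset.sum_le_sum_of_subset_of_nonneg hsub (fun k _ _ => hq0 k)
    rw [Finset.sum_insert (by simpa using hjb), Finset.sum_singleton, hq1] at this
    exact this
  have h1 : (Real.exp t - 1) * q j ≤ (t + t ^ 2 / 2 + 2 / 9 * t ^ 3) * q j :=
    mul_le_mul_of_nonneg_right (by linarith) (hq0 j)
  have h2 : (Real.exp (-t) - 1) * q b ≤ (-t + t ^ 2 / 2 + 2 / 9 * t ^ 3) * q b :=
    mul_le_mul_of_nonneg_right (by linarith) (hq0 b)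
  have hkey : (Real.exp t - 1) * q j + (Real.exp (-t) - 1) * q b ≤ -(2 * Δ ^ 2 / 9) := by
    have hqb0 := hq0 b
    have hqj0 := hq0 j
    nlinarith [h1, h2, mul_le_mul_of_nonneg_left hgap ht0,
      mul_le_mul_of_nonneg_left hqjb (by positivity : (0:ℝ) ≤ t ^ 2 / 2 + 2 / 9 * t ^ 3),
      mul_le_mul_of_nonneg_left hΔ1 (sq_nonneg Δ), hΔpos.le, sq_nonneg Δ]
  have := Real.add_one_le_exp (-2 * Δ ^ 2 / 9)
  linarith

lemma sum_biUnion_le_sum {α β : Type*} [DecidableEq β] (s : Finset α) (t : α → Finset β)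
    (f : β → ℝ) (hf : ∀ x, 0 ≤ f x) :
    ∑ x ∈ s.biUnion t, f x ≤ ∑ a ∈ s, ∑ x ∈ t a, f x := by
  classical
  induction s using Finset.induction with
  | empty => simp
  | @insert a s ha ih =>
    rw [Finset.biUnion_insert, Finset.sum_insert ha]
    have h2 : ∑ x ∈ t a ∪ s.biUnion t, f x ≤ ∑ x ∈ t a, f x + ∑ x ∈ s.biUnion t, f x := by
      have h3 := Finset.sum_union_inter (s₁ := t a) (s₂ := s.biUnion t) (f := f)
      have h4 : 0 ≤ ∑ x ∈ t a ∩ s.biUnion t, f x := Finset.sum_nonneg fun x _ => hf x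
      linarith
    exact h2.trans (by linarith)

lemma combinatorial_core {K n : ℕ} (A : Fin n → Fin K → Bool) (m : Fin K → ℕ)
    (hm : ∀ b, m b = (Finset.univ.filter (fun i => A i b = true)).card)
    (w : Fin n → Fin K → ℝ) (q : Fin K → Fin K → ℝ)
    (hw0 : ∀ i k, 0 ≤ w i k) (hw1 : ∀ i, ∑ k, w i k = 1)
    (hwq : ∀ i b, A i b = true → w i = q b)
    (hq0 : ∀ b k, 0 ≤ q b k) (hm_one : ∀ b, 1 ≤ m b)
    (Δ : ℝ) (hΔpos : 0 < Δ) (hΔ1 : Δ ≤ 1)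
    (hgap : ∀ b j, j ≠ b → Δ ≤ q b b - q b j)
    (G : Finset (Fin n → Fin K))
    (hG : ∀ y, y ∈ G ↔ ∀ b j, j ≠ b →
      (Finset.univ.filter (fun i => A i b = true ∧ y i = j)).card
        < (Finset.univ.filter (fun i => A i b = true ∧ y i = b)).card) :
    1 - 2 * (K : ℝ) ^ 2 * Real.exp (-2 * Δ ^ 2 * (⨅ b : Fin K, (m b : ℝ)) / 9)
      ≤ ∑ y ∈ G, ∏ i, w i (y i) := by
  classical
  set M : ℝ := ⨅ b : Fin K, (m b : ℝ) with hM
  have hMle : ∀ b, M ≤ m b := fun b => ciInf_le (Finite.bddBelow_range _) b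
  set p : (Fin n → Fin K) → ℝ := fun y => ∏ i, w i (y i) with hp
  have hp0 : ∀ y, 0 ≤ p y := fun y => Finset.prod_nonneg (fun i _ => hw0 i (y i))
  have htot : ∑ y : Fin n → Fin K, p y = 1 := by
    have h := Fintype.prod_sum (f := fun (i : Fin n) (k : Fin K) => w i k)
    simp only [hw1, Finset.prod_const_one] at h
    rw [hp, ← h]
  set Bad : Fin K → Fin K → Finset (Fin n → Fin K) := fun b j =>
    Finset.univ.filter (fun y : Fin n → Fin K =>
      (Finset.univ.filter (fun i => A i b = true ∧ y i = b)).card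
        ≤ (Finset.univ.filter (fun i => A i b = true ∧ y i = j)).card) with hBad
  have hpair : ∀ b j : Fin K, j ≠ b →
      ∑ y ∈ Bad b j, p y ≤ Real.exp (-2 * Δ ^ 2 * M / 9) := by
    intro b j hjb
    set t : ℝ := 4 * Δ / 5 with ht
    set ζ : Fin n → Fin K → ℝ := fun i k =>
      if A i b = true then ((if k = j then (1:ℝ) else 0) - (if k = b then 1 else 0)) else 0
      with hζ
    have step1 : ∑ y ∈ Bad b j, p y
        ≤ ∑ y ∈ Bad b j, p y * Real.exp (t * ∑ i, ζ i (y i)) := by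
      apply Finset.sum_le_sum
      intro y hy
      have hyb : (Finset.univ.filter (fun i => A i b = true ∧ y i = b)).card
          ≤ (Finset.univ.filter (fun i => A i b = true ∧ y i = j)).card := by
        simpa [hBad] using hy
      have hzsum : (0:ℝ) ≤ ∑ i, ζ i (y i) := by
        have hζy : ∀ i, ζ i (y i)
            = (if A i b = true ∧ y i = j then (1:ℝ) else 0)
              - (if A i b = true ∧ y i = b then (1:ℝ) else 0) := by
          intro i
          by_cases hA : A i b = true <;> simp [hζ, hA]
        rw [Finset.sum_congr rfl (fun i _ => hζy i), Finset.sum_sub_distrib,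
          Finset.sum_boole, Finset.sum_boole, sub_nonneg]
        exact_mod_cast hyb
      have : (1:ℝ) ≤ Real.exp (t * ∑ i, ζ i (y i)) := by
        rw [← Real.exp_zero]
        apply Real.exp_le_exp.mpr
        have ht0 : (0:ℝ) ≤ t := by rw [ht]; positivity
        exact mul_nonneg ht0 hzsum
      nlinarith [hp0 y]
    have step2 : ∑ y ∈ Bad b j, p y * Real.exp (t * ∑ i, ζ i (y i))
        ≤ ∑ y : Fin n → Fin K, p y * Real.exp (t * ∑ i, ζ i (y i)) := by
      apply Finset.sum_le_sum_of_subset_of_nonneg (Finset.subset_univ _)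
      intro y _ _
      exact mul_nonneg (hp0 y) (Real.exp_pos _).le
    have step3 : ∑ y : Fin n → Fin K, p y * Real.exp (t * ∑ i, ζ i (y i))
        = ∏ i, ∑ k, w i k * Real.exp (t * ζ i k) := by
      rw [Fintype.prod_sum (f := fun (i : Fin n) (k : Fin K) => w i k * Real.exp (t * ζ i k))]
      apply Finset.sum_congr rfl
      intro y _
      rw [Finset.prod_mul_distrib, hp]
      congr 1
      rw [Finset.mul_sum, Real.exp_sum]
    set c : ℝ := ∑ k, q b k * Real.exp
        (t * ((if k = j then (1:ℝ) else 0) - (if k = b then 1 else 0))) with hc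
    have hfac : ∀ i, ∑ k, w i k * Real.exp (t * ζ i k)
        = if A i b = true then c else 1 := by
      intro i
      by_cases hA : A i b = true
      · rw [if_pos hA, hc, hwq i b hA]
        apply Finset.sum_congr rfl
        intro k _
        simp [hζ, hA]
      · rw [if_neg hA]
        have : ∀ k, w i k * Real.exp (t * ζ i k) = w i k := by
          intro k; simp [hζ, hA]
        rw [Finset.sum_congr rfl (fun k _ => this k), hw1 i]
    have hq1b : ∑ k, q b k = 1 := by
      have hmb := hm_one b
      rw [hm b] at hmb
      obtain ⟨i, hi⟩ := Finset.card_pos.mp hmb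
      have hiA : A i b = true := (Finset.mem_filter.mp hi).2
      rw [← hwq i b hiA]
      exact hw1 i
    have hc_le : c ≤ Real.exp (-2 * Δ ^ 2 / 9) :=
      mgf_step (q b) (hq0 b) hq1b b j hjb Δ hΔpos hΔ1 (hgap b j hjb)
    have hc0 : 0 ≤ c := Finset.sum_nonneg fun k _ => mul_nonneg (hq0 b k) (Real.exp_pos _).le
    have hprodc : ∏ i, (if A i b = true then c else 1) = c ^ m b := by
      rw [Finset.prod_ite (fun _ => c) (fun _ => (1:ℝ)), Finset.prod_const,
        Finset.prod_const, one_pow, mul_one, hm b]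
    calc ∑ y ∈ Bad b j, p y
        ≤ ∏ i, ∑ k, w i k * Real.exp (t * ζ i k) := le_trans step1 (step2.trans_eq step3)
      _ = c ^ m b := by rw [Finset.prod_congr rfl (fun i _ => hfac i), hprodc]
      _ ≤ (Real.exp (-2 * Δ ^ 2 / 9)) ^ m b := pow_le_pow_left₀ hc0 hc_le (m b)
      _ = Real.exp ((m b : ℝ) * (-2 * Δ ^ 2 / 9)) := (Real.exp_nat_mul _ (m b)).symm
      _ ≤ Real.exp (-2 * Δ ^ 2 * M / 9) := by
          apply Real.exp_le_exp.mpr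
          have h1 : (0:ℝ) ≤ Δ ^ 2 := sq_nonneg Δ
          have h2 := hMle b
          nlinarith
  -- union bound
  have hGc : ∑ y ∈ Finset.univ.filter (fun y => y ∉ G), p y
      ≤ (K:ℝ) ^ 2 * Real.exp (-2 * Δ ^ 2 * M / 9) := by
    set Pairs : Finset (Fin K × Fin K) :=
      Finset.univ.filter (fun bj : Fin K × Fin K => bj.2 ≠ bj.1) with hPairs
    have hsub : Finset.univ.filter (fun y => y ∉ G)
        ⊆ Pairs.biUnion (fun bj => Bad bj.1 bj.2) := by
      intro y hy
      have hyG : y ∉ G := (Finset.mem_filter.mp hy).2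
      rw [hG] at hyG
      push_neg at hyG
      obtain ⟨b, j, hjb, hcard⟩ := hyG
      apply Finset.mem_biUnion.mpr
      exact ⟨(b, j), by simp [hPairs, hjb], by simp [hBad, hcard]⟩
    calc ∑ y ∈ Finset.univ.filter (fun y => y ∉ G), p y
        ≤ ∑ y ∈ Pairs.biUnion (fun bj => Bad bj.1 bj.2), p y :=
          Finset.sum_le_sum_of_subset_of_nonneg hsub (fun y _ _ => hp0 y)
      _ ≤ ∑ bj ∈ Pairs, ∑ y ∈ Bad bj.1 bj.2, p y := sum_biUnion_le_sum _ _ _ hp0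
      _ ≤ ∑ bj ∈ Pairs, Real.exp (-2 * Δ ^ 2 * M / 9) := by
          apply Finset.sum_le_sum
          intro bj hbj
          exact hpair bj.1 bj.2 (by simpa [hPairs] using hbj)
      _ ≤ (K:ℝ) ^ 2 * Real.exp (-2 * Δ ^ 2 * M / 9) := by
          rw [Finset.sum_const, nsmul_eq_mul]
          apply mul_le_mul_of_nonneg_right _ (Real.exp_pos _).le
          calc (Pairs.card : ℝ) ≤ ((Finset.univ : Finset (Fin K × Fin K)).card : ℝ) := by
                exact_mod_cast Nat.cast_le.mpr (Finset.card_le_card (Finset.filter_subset _ _))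
            _ = (K:ℝ) ^ 2 := by simp [sq]
  have hsplit : ∑ y ∈ G, p y = 1 - ∑ y ∈ Finset.univ.filter (fun y => y ∉ G), p y := by
    have := Finset.sum_filter_add_sum_filter_not Finset.univ (fun y => y ∈ G) p
    have hfe : Finset.univ.filter (fun y => y ∈ G) = G := by ext y; simp
    rw [hfe, htot] at this
    linarith
  rw [hp] at hsplit ⊢
  rw [hsplit]
  have hexp : 0 < Real.exp (-2 * Δ ^ 2 * M / 9) := Real.exp_pos _
  nlinarith [sq_nonneg (K:ℝ)]

/-- **Theorem 2 (majority-vote recovery of the permutation).**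
I.i.d. labeled pairs `(X i, Y i)` from the true model; a mixing measure `(lam, f)`
whose decision regions `D b = {x | ∀ j ≠ b, lam j * f j x < lam b * f b x}` all have
positive probability; majority-vote gap
`Δ = min_b [P(Y = b | X ∈ D b) - max_{j ≠ b} P(Y = j | X ∈ D b)] > 0`.
Conditionally on the region-membership indicators being equal to a fixed pattern `A`
(an event of positive probability) on which each region contains `m b ≥ 1` samples,
the conditional probability that every label `b` is the unique majority label in
region `b` is at least `1 - 2K² exp(-2Δ²(min_b m b)/9)`. -/
theorem majority_vote_recovery
    {Ω : Type*} [MeasurableSpace Ω] (P : Measure Ω) [IsProbabilityMeasure P]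
    (d K n : ℕ) (hK : 2 ≤ K) (hn : 0 < n)
    -- true weights and class-conditional densities
    (lamstar : Fin K → ℝ) (fstar : Fin K → (Fin d → ℝ) → ℝ)
    (hlamstar_pos : ∀ k, 0 < lamstar k) (hlamstar_sum : ∑ k, lamstar k = 1)
    (hfstar_meas : ∀ k, Measurable (fstar k))
    (hfstar_nonneg : ∀ k x, 0 ≤ fstar k x)
    (hfstar_int : ∀ k, ∫ x, fstar k x = 1)
    -- i.i.d. labeled pairs from the true model
    (X : Fin n → Ω → (Fin d → ℝ)) (Y : Fin n → Ω → Fin K)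
    (hX_meas : ∀ i, Measurable (X i)) (hY_meas : ∀ i, Measurable (Y i))
    (hindep : iIndepFun (fun i ω => (X i ω, Y i ω)) P)
    (hY_law : ∀ i k, P {ω | Y i ω = k} = ENNReal.ofReal (lamstar k))
    (hcond_law : ∀ i k, Measure.map (X i) (P[|{ω | Y i ω = k}])
      = volume.withDensity (fun x => ENNReal.ofReal (fstar k x)))
    -- the mixing measure Λ, its decision regions, and their positive probability
    (lam : Fin K → ℝ) (f : Fin K → (Fin d → ℝ) → ℝ)
    (hlam_pos : ∀ b, 0 < lam b) (hlam_sum : ∑ b, lam b = 1)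
    (hf_meas : ∀ b, Measurable (f b))
    (hf_nonneg : ∀ b x, 0 ≤ f b x) (hf_int : ∀ b, ∫ x, f b x = 1)
    (D : Fin K → Set (Fin d → ℝ))
    (hD : ∀ b, D b = {x | ∀ j, j ≠ b → lam j * f j x < lam b * f b x})
    (hD_pos : ∀ b, 0 < P {ω | X ⟨0, hn⟩ ω ∈ D b})
    -- the majority-vote gap Δ > 0
    (Δ : ℝ)
    (hΔ : Δ = ⨅ b : Fin K,
      ((P[|{ω | X ⟨0, hn⟩ ω ∈ D b}] {ω | Y ⟨0, hn⟩ ω = b}).toReal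
        - ⨆ j : {j : Fin K // j ≠ b},
            (P[|{ω | X ⟨0, hn⟩ ω ∈ D b}] {ω | Y ⟨0, hn⟩ ω = j.1}).toReal))
    (hΔpos : 0 < Δ)
    -- a fixed region-membership pattern A with counts m b ≥ 1 and positive probability
    (A : Fin n → Fin K → Bool)
    (m : Fin K → ℕ)
    (hm : ∀ b, m b = (Finset.univ.filter (fun i => A i b = true)).card)
    (hm_one : ∀ b, 1 ≤ m b)
    (hA_pos : P {ω | ∀ i b, X i ω ∈ D b ↔ A i b = true} ≠ 0) :
    1 - 2 * (K : ℝ) ^ 2 * Real.exp (-2 * Δ ^ 2 * (⨅ b : Fin K, (m b : ℝ)) / 9)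
      ≤ ((P[|{ω | ∀ i b, X i ω ∈ D b ↔ A i b = true}])
          {ω | ∀ b j : Fin K, j ≠ b →
            (Finset.univ.filter (fun i => A i b = true ∧ Y i ω = j)).card
              < (Finset.univ.filter (fun i => A i b = true ∧ Y i ω = b)).card}).toReal := by
  classical
  set i0 : Fin n := ⟨0, hn⟩ with hi0
  -- measurability and disjointness of decision regions
  have hDmeas : ∀ b, MeasurableSet (D b) := by
    intro b
    rw [hD b]
    have : {x | ∀ j, j ≠ b → lam j * f j x < lam b * f b x}
        = ⋂ j, ⋂ (_ : j ≠ b), {x | lam j * f j x < lam b * f b x} := by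
      ext x; simp
    rw [this]
    exact MeasurableSet.iInter fun j => MeasurableSet.iInter fun _ =>
      measurableSet_lt ((hf_meas j).const_mul _) ((hf_meas b).const_mul _)
  have hDdisj : ∀ b b', b ≠ b' → ∀ x, x ∈ D b → x ∉ D b' := by
    intro b b' hbb x hx hx'
    rw [hD b] at hx
    rw [hD b'] at hx'
    exact lt_asymm (hx b' (Ne.symm hbb)) (hx' b hbb)
  set E : Set Ω := {ω | ∀ i b, X i ω ∈ D b ↔ A i b = true} with hE
  set S : Fin n → Set (Fin d → ℝ) := fun i => {x | ∀ b, x ∈ D b ↔ A i b = true} with hS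
  have hEeq : E = ⋂ i, X i ⁻¹' S i := by
    ext ω
    simp only [hE, hS, Set.mem_setOf_eq, Set.mem_iInter, Set.mem_preimage]
  have hSmeas : ∀ i, MeasurableSet (S i) := by
    intro i
    have hrepr : S i = ⋂ b, (if A i b = true then D b else (D b)ᶜ) := by
      ext x
      simp only [hS, Set.mem_setOf_eq, Set.mem_iInter]
      constructor
      · intro h b
        by_cases hA : A i b = true
        · rw [if_pos hA]; exact (h b).mpr hA
        · rw [if_neg hA]; exact fun hx => hA ((h b).mp hx)
      · intro h b
        have hb := h b
        by_cases hA : A i b = true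
        · rw [if_pos hA] at hb; exact ⟨fun _ => hA, fun _ => hb⟩
        · rw [if_neg hA] at hb; exact ⟨fun hx => absurd hx hb, fun hA' => absurd hA' hA⟩
    rw [hrepr]
    refine MeasurableSet.iInter fun b => ?_
    by_cases hA : A i b = true
    · rw [if_pos hA]; exact hDmeas b
    · rw [if_neg hA]; exact (hDmeas b).compl
  have hEmeas : MeasurableSet E := by
    rw [hEeq]
    exact MeasurableSet.iInter fun i => (hX_meas i) (hSmeas i)
  -- each row of A has at most one true entry
  have hrow : ∀ i b b', A i b = true → A i b' = true → b = b' := by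
    intro i b b' hb hb'
    by_contra hne
    apply hA_pos
    have hempty : E = ∅ := by
      rw [Set.eq_empty_iff_forall_notMem]
      intro ω hω
      simp only [hE, Set.mem_setOf_eq] at hω
      exact hDdisj b b' hne (X i ω) ((hω i b).mpr hb) ((hω i b').mpr hb')
    rw [hempty]
    exact measure_empty
  have hSD : ∀ i b, A i b = true → S i = D b := by
    intro i b hA
    ext x
    simp only [hS, Set.mem_setOf_eq]
    constructor
    · intro h; exact (h b).mpr hA
    · intro hx b'
      by_cases hbb : b' = b
      · subst hbb; exact ⟨fun _ => hA, fun _ => hx⟩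
      · have hxb' : x ∉ D b' := hDdisj b b' (fun h => hbb h.symm) x hx
        have hAb' : A i b' ≠ true := fun h => hbb (hrow i b' b h hA)
        exact ⟨fun hx' => absurd hx' hxb', fun h => absurd h hAb'⟩
  -- independence: product formula
  have hkey : ∀ T : Fin n → Set ((Fin d → ℝ) × Fin K), (∀ i, MeasurableSet (T i)) →
      P (⋂ i, (fun ω => (X i ω, Y i ω)) ⁻¹' T i)
        = ∏ i, P ((fun ω => (X i ω, Y i ω)) ⁻¹' T i) :=
    fun T hT => hindep.meas_iInter (fun i => ⟨T i, hT i, rfl⟩)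
  have hpre1 : ∀ i, (fun ω => (X i ω, Y i ω)) ⁻¹' ((S i) ×ˢ (Set.univ : Set (Fin K)))
      = X i ⁻¹' S i := by
    intro i; ext ω; simp
  have hpre2 : ∀ i (k : Fin K), (fun ω => (X i ω, Y i ω)) ⁻¹' ((S i) ×ˢ ({k} : Set (Fin K)))
      = X i ⁻¹' S i ∩ Y i ⁻¹' {k} := by
    intro i k; ext ω
    simp only [Set.mem_preimage, Set.mem_prod, Set.mem_inter_iff, Set.mem_singleton_iff]
  have hPE : P E = ∏ i, P (X i ⁻¹' S i) := by
    rw [hEeq]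
    have h1 : (⋂ i, X i ⁻¹' S i)
        = ⋂ i, (fun ω => (X i ω, Y i ω)) ⁻¹' ((S i) ×ˢ (Set.univ : Set (Fin K))) :=
      Set.iInter_congr fun i => (hpre1 i).symm
    rw [h1, hkey _ (fun i => (hSmeas i).prod MeasurableSet.univ)]
    exact Finset.prod_congr rfl fun i _ => by rw [hpre1]
  have hEi_ne : ∀ i, P (X i ⁻¹' S i) ≠ 0 := by
    intro i h
    exact hA_pos (by rw [hPE]; exact Finset.prod_eq_zero (Finset.mem_univ i) h)
  -- the conditional label distribution in each region
  set w : Fin n → Fin K → ℝ := fun i k =>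
    (P (X i ⁻¹' S i ∩ Y i ⁻¹' {k})).toReal / (P (X i ⁻¹' S i)).toReal with hw
  have hpart : ∀ (i : Fin n) (B : Set Ω), MeasurableSet B →
      ∑ k, P (B ∩ Y i ⁻¹' {k}) = P B := by
    intro i B hB
    have hcover : B = ⋃ k, B ∩ Y i ⁻¹' {k} := by
      ext ω
      simp only [Set.mem_iUnion, Set.mem_inter_iff, Set.mem_preimage, Set.mem_singleton_iff]
      exact ⟨fun h => ⟨Y i ω, h, rfl⟩, fun ⟨k, h, _⟩ => h⟩
    have hdisj : Pairwise (Function.onFun Disjoint (fun k => B ∩ Y i ⁻¹' {k})) := by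
      intro k k' hkk
      refine Set.disjoint_left.mpr fun ω h1 h2 => hkk ?_
      rw [← h1.2, ← h2.2]
    calc ∑ k, P (B ∩ Y i ⁻¹' {k}) = ∑' k, P (B ∩ Y i ⁻¹' {k}) := (tsum_fintype _).symm
      _ = P (⋃ k, B ∩ Y i ⁻¹' {k}) :=
          (measure_iUnion hdisj fun k => hB.inter (hY_meas i (measurableSet_singleton k))).symm
      _ = P B := by rw [← hcover]
  have hw0 : ∀ i k, 0 ≤ w i k := fun i k => div_nonneg ENNReal.toReal_nonneg ENNReal.toReal_nonneg
  have hw1 : ∀ i, ∑ k, w i k = 1 := by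
    intro i
    rw [hw]
    simp only []
    rw [← Finset.sum_div, ← ENNReal.toReal_sum (fun k _ => measure_ne_top _ _),
      hpart i _ ((hX_meas i) (hSmeas i))]
    exact div_self (ENNReal.toReal_ne_zero.mpr ⟨hEi_ne i, measure_ne_top _ _⟩)
  -- the region-conditional law is the same for every sample
  set ν : Fin K → Measure (Fin d → ℝ) :=
    fun k => volume.withDensity (fun x => ENNReal.ofReal (fstar k x)) with hν
  set R : Fin K → Fin K → ENNReal := fun b k => ENNReal.ofReal (lamstar k) * ν k (D b) with hR
  have hjoint : ∀ (i : Fin n) (b k : Fin K), P (X i ⁻¹' D b ∩ Y i ⁻¹' {k}) = R b k := by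
    intro i b k
    have hYset : MeasurableSet {ω | Y i ω = k} := hY_meas i (measurableSet_singleton k)
    have h1 : Measure.map (X i) (P[|{ω | Y i ω = k}]) (D b) = ν k (D b) := by
      rw [hcond_law i k, hν]
    rw [Measure.map_apply (hX_meas i) (hDmeas b), cond_apply hYset, hY_law i k] at h1
    have hne : ENNReal.ofReal (lamstar k) ≠ 0 := by
      simp only [ne_eq, ENNReal.ofReal_eq_zero, not_le]
      exact hlamstar_pos k
    have h2 : P ({ω | Y i ω = k} ∩ X i ⁻¹' D b) = ENNReal.ofReal (lamstar k) * ν k (D b) := by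
      rw [← h1, ← mul_assoc, ENNReal.mul_inv_cancel hne ENNReal.ofReal_ne_top, one_mul]
    rw [hR]
    simp only []
    rw [← h2, Set.inter_comm]
    rfl
  have hmarg : ∀ (i : Fin n) (b : Fin K), P (X i ⁻¹' D b) = ∑ k, R b k := by
    intro i b
    rw [← hpart i _ ((hX_meas i) (hDmeas b))]
    exact Finset.sum_congr rfl fun k _ => hjoint i b k
  set q : Fin K → Fin K → ℝ := fun b k => (R b k).toReal / (∑ k', R b k').toReal with hq
  have hR_top : ∀ b k, R b k ≠ ⊤ := fun b k => by
    rw [← hjoint i0 b k]; exact measure_ne_top _ _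
  have hRsum_ne : ∀ b, (∑ k', R b k') ≠ 0 := by
    intro b
    rw [← hmarg i0 b]
    exact fun h => absurd h (hD_pos b).ne'
  have hRsum_top : ∀ b, (∑ k', R b k') ≠ ⊤ := by
    intro b
    rw [← hmarg i0 b]
    exact measure_ne_top _ _
  have hwq : ∀ i b, A i b = true → w i = q b := by
    intro i b hA
    funext k
    rw [hw, hq]
    simp only []
    rw [hSD i b hA, hjoint i b k, hmarg i b]
  have hq0 : ∀ b k, 0 ≤ q b k :=
    fun b k => div_nonneg ENNReal.toReal_nonneg ENNReal.toReal_nonneg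
  -- identify q with the conditional probabilities in the definition of Δ
  have hqcond : ∀ b k, (P[|{ω | X i0 ω ∈ D b}] {ω | Y i0 ω = k}).toReal = q b k := by
    intro b k
    have hms : MeasurableSet {ω | X i0 ω ∈ D b} := (hX_meas i0) (hDmeas b)
    rw [cond_apply hms, ENNReal.toReal_mul, ENNReal.toReal_inv]
    have h1 : P ({ω | X i0 ω ∈ D b} ∩ {ω | Y i0 ω = k}) = R b k := hjoint i0 b k
    have h2 : P {ω | X i0 ω ∈ D b} = ∑ k', R b k' := hmarg i0 b
    rw [h1, h2, inv_mul_eq_div, hq]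
  have hgap : ∀ b j, j ≠ b → Δ ≤ q b b - q b j := by
    intro b j hjb
    have hΔ' : Δ = ⨅ b : Fin K, (q b b - ⨆ j' : {j' : Fin K // j' ≠ b}, q b j'.1) := by
      rw [hΔ]
      congr 1
      funext b'
      rw [hqcond b' b',
        show (fun j' : {j' : Fin K // j' ≠ b'} =>
            (P[|{ω | X i0 ω ∈ D b'}] {ω | Y i0 ω = j'.1}).toReal) = fun j' => q b' j'.1
          from funext fun j' => hqcond b' j'.1]
    have h1 : Δ ≤ q b b - ⨆ j' : {j' : Fin K // j' ≠ b}, q b j'.1 := by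
      rw [hΔ']
      exact ciInf_le (Finite.bddBelow_range _) b
    have h2 : q b j ≤ ⨆ j' : {j' : Fin K // j' ≠ b}, q b j'.1 :=
      le_ciSup (f := fun j' : {j' : Fin K // j' ≠ b} => q b j'.1)
        (Finite.bddAbove_range _) ⟨j, hjb⟩
    linarith
  have hq_le_one : ∀ b k, q b k ≤ 1 := by
    intro b k
    rw [hq]
    simp only []
    rw [div_le_one (ENNReal.toReal_pos (hRsum_ne b) (hRsum_top b))]
    exact ENNReal.toReal_mono (hRsum_top b)
      (Finset.single_le_sum (fun k' _ => zero_le) (Finset.mem_univ k))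
  have hΔ1 : Δ ≤ 1 := by
    have hne10 : (⟨0, by omega⟩ : Fin K) ≠ ⟨1, by omega⟩ := by
      intro h
      have := congrArg Fin.val h
      simp at this
    have hgap' := hgap ⟨1, by omega⟩ ⟨0, by omega⟩ hne10
    have h1 := hq_le_one ⟨1, by omega⟩ ⟨1, by omega⟩
    have h2 := hq0 ⟨1, by omega⟩ ⟨0, by omega⟩
    linarith
  -- conditional measure of each label configuration
  haveI hPcond : IsProbabilityMeasure (P[|E]) := cond_isProbabilityMeasure hA_pos
  set G : Finset (Fin n → Fin K) := Finset.univ.filter (fun y => ∀ b j : Fin K, j ≠ b →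
      (Finset.univ.filter (fun i => A i b = true ∧ y i = j)).card
        < (Finset.univ.filter (fun i => A i b = true ∧ y i = b)).card) with hG
  have hGmem : ∀ y, y ∈ G ↔ ∀ b j : Fin K, j ≠ b →
      (Finset.univ.filter (fun i => A i b = true ∧ y i = j)).card
        < (Finset.univ.filter (fun i => A i b = true ∧ y i = b)).card := by
    intro y
    rw [hG]
    simp only [Finset.mem_filter, Finset.mem_univ, true_and]
  set C : (Fin n → Fin K) → Set Ω := fun y => ⋂ i, Y i ⁻¹' {y i} with hC
  have hCmeas : ∀ y, MeasurableSet (C y) :=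
    fun y => MeasurableSet.iInter fun i => hY_meas i (measurableSet_singleton _)
  have hTeq : {ω | ∀ b j : Fin K, j ≠ b →
      (Finset.univ.filter (fun i => A i b = true ∧ Y i ω = j)).card
        < (Finset.univ.filter (fun i => A i b = true ∧ Y i ω = b)).card}
      = ⋃ y ∈ G, C y := by
    ext ω
    simp only [Set.mem_setOf_eq, Set.mem_iUnion]
    constructor
    · intro h
      refine ⟨fun i => Y i ω, ?_, ?_⟩
      · rw [hGmem]
        exact h
      · exact Set.mem_iInter.mpr fun i => rfl
    · rintro ⟨y, hyG, hyC⟩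
      have hyi : ∀ i, Y i ω = y i := fun i => Set.mem_iInter.mp hyC i
      intro b j hjb
      have := (hGmem y).mp hyG b j hjb
      simpa only [hyi] using this
  have hCdisj : (G : Set (Fin n → Fin K)).PairwiseDisjoint C := by
    intro y1 _ y2 _ hne
    refine Set.disjoint_left.mpr fun ω h1 h2 => hne (funext fun i => ?_)
    have e1 : Y i ω = y1 i := Set.mem_iInter.mp h1 i
    have e2 : Y i ω = y2 i := Set.mem_iInter.mp h2 i
    rw [← e1, ← e2]
  have hCval : ∀ y : Fin n → Fin K, (P[|E] (C y)).toReal = ∏ i, w i (y i) := by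
    intro y
    have hiE : E ∩ C y = ⋂ i, (fun ω => (X i ω, Y i ω)) ⁻¹' ((S i) ×ˢ ({y i} : Set (Fin K))) := by
      rw [hEeq, hC]
      ext ω
      simp only [Set.mem_inter_iff, Set.mem_iInter, Set.mem_preimage, Set.mem_prod,
        Set.mem_singleton_iff]
      exact ⟨fun ⟨hx, hy⟩ i => ⟨hx i, hy i⟩, fun h => ⟨fun i => (h i).1, fun i => (h i).2⟩⟩
    rw [cond_apply hEmeas, hiE,
      hkey _ (fun i => (hSmeas i).prod (measurableSet_singleton _)), hPE]
    rw [Finset.prod_congr rfl (fun i (_ : i ∈ Finset.univ) => congrArg P (hpre2 i (y i)))]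
    rw [ENNReal.toReal_mul, ENNReal.toReal_inv, ENNReal.toReal_prod, ENNReal.toReal_prod]
    rw [← Finset.prod_inv_distrib, ← Finset.prod_mul_distrib]
    exact Finset.prod_congr rfl fun i _ => by rw [inv_mul_eq_div, hw]
  have hmeasT : (P[|E] {ω | ∀ b j : Fin K, j ≠ b →
      (Finset.univ.filter (fun i => A i b = true ∧ Y i ω = j)).card
        < (Finset.univ.filter (fun i => A i b = true ∧ Y i ω = b)).card}).toReal
      = ∑ y ∈ G, ∏ i, w i (y i) := by
    rw [hTeq, measure_biUnion_finset hCdisj (fun y _ => hCmeas y),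
      ENNReal.toReal_sum (fun y _ => measure_ne_top _ _)]
    exact Finset.sum_congr rfl fun y _ => hCval y
  rw [hmeasT]
  exact combinatorial_core A m hm w q hw0 hw1 hwq hq0 hm_one Δ hΔpos hΔ1 hgap G hGmem
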